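/- Let d ≥ 1 and let Φ̄^d_{AB} := (1/d) Σ_{m=0}^{d−1} |m⟩⟨m|_A ⊗ |m⟩⟨m|_B be the maximally classically correlated state on C^d ⊗ C^d. For all positive semi-definite operators σ_A, σ_B with Tr[σ_A] ≤ 1 and Tr[σ_B] ≤ 1, the fidelity satisfies F(Φ̄^d_{AB}, σ_A ⊗ σ_B) ≤ 1/d. -/

import Mathlib

open Matrix Kronecker ComplexOrder

/-- The square root of a positive semidefinite matrix (Mathlib's former `Matrix.PosSemidef.sqrt`). -/
noncomputable def Matrix.PosSemidef.sqrt {n : Type*} [Fintype n] [DecidableEq n] {A : Matrix n n ℂ}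
    (hA : A.PosSemidef) : Matrix n n ℂ :=
  (hA.1.eigenvectorUnitary : Matrix n n ℂ) *
    diagonal (fun i => ((Real.sqrt (hA.1.eigenvalues i) : ℝ) : ℂ)) *
    (star hA.1.eigenvectorUnitary : Matrix n n ℂ)

/-- The trace norm ‖A‖₁ = Tr √(AᴴA). -/
noncomputable def traceNorm {n : Type*} [Fintype n] [DecidableEq n] (A : Matrix n n ℂ) : ℝ :=
  ((Matrix.posSemidef_conjTranspose_mul_self A).sqrt).trace.re

/-- The positive-semidefinite square root of a matrix (0 if not PSD). -/
noncomputable def msqrt {n : Type*} [Fintype n] [DecidableEq n] (A : Matrix n n ℂ) :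
    Matrix n n ℂ :=
  open scoped Classical in
  if h : A.PosSemidef then h.sqrt else 0

/-- Uhlmann fidelity F(A,B) = ‖√A √B‖₁² of positive semi-definite operators. -/
noncomputable def fid {n : Type*} [Fintype n] [DecidableEq n] (A B : Matrix n n ℂ) : ℝ :=
  (traceNorm (msqrt A * msqrt B)) ^ 2

/-- The maximally classically correlated state Φ̄^d = (1/d) ∑ₘ |m⟩⟨m| ⊗ |m⟩⟨m|. -/
noncomputable def maxClassCorr (d : ℕ) : Matrix (Fin d × Fin d) (Fin d × Fin d) ℂ :=
  ((d : ℂ))⁻¹ • ∑ m : Fin d,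
    (Matrix.single m m 1) ⊗ₖ (Matrix.single m m 1)

lemma Matrix.PosSemidef.posSemidef_sqrt {n : Type*} [Fintype n] [DecidableEq n] {A : Matrix n n ℂ}
    (hA : A.PosSemidef) : hA.sqrt.PosSemidef := by
  unfold Matrix.PosSemidef.sqrt
  rw [Matrix.star_eq_conjTranspose]
  apply Matrix.PosSemidef.mul_mul_conjTranspose_same
  apply Matrix.PosSemidef.diagonal
  intro i
  simp only [Pi.zero_apply]
  exact_mod_cast Real.sqrt_nonneg _

lemma Matrix.PosSemidef.sqrt_mul_self {n : Type*} [Fintype n] [DecidableEq n] {A : Matrix n n ℂ}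
    (hA : A.PosSemidef) : hA.sqrt * hA.sqrt = A := by
  have hU : (star hA.1.eigenvectorUnitary : Matrix n n ℂ) *
      (hA.1.eigenvectorUnitary : Matrix n n ℂ) = 1 := by simp
  have hspec := hA.1.spectral_theorem
  rw [Unitary.conjStarAlgAut_apply] at hspec
  unfold Matrix.PosSemidef.sqrt
  conv_rhs => rw [hspec]
  calc _ = (hA.1.eigenvectorUnitary : Matrix n n ℂ) *
        (diagonal (fun i => ((Real.sqrt (hA.1.eigenvalues i) : ℝ) : ℂ)) *
        ((star hA.1.eigenvectorUnitary : Matrix n n ℂ) * (hA.1.eigenvectorUnitary : Matrix n n ℂ)) *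
        diagonal (fun i => ((Real.sqrt (hA.1.eigenvalues i) : ℝ) : ℂ))) *
        (star hA.1.eigenvectorUnitary : Matrix n n ℂ) := by simp only [Matrix.mul_assoc]
    _ = _ := by
      rw [hU, Matrix.mul_one, Matrix.diagonal_mul_diagonal]
      congr 3
      funext i
      rw [← Complex.ofReal_mul, Real.mul_self_sqrt (hA.eigenvalues_nonneg i)]
      rfl


-- diagonal entries of PSD are nonneg
lemma psd_diag_nonneg {n : Type*} [Fintype n] [DecidableEq n] {A : Matrix n n ℂ}
    (hA : A.PosSemidef) (i : n) : 0 ≤ A i i := by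
  exact hA.diag_nonneg

lemma psd_trace_re_nonneg {n : Type*} [Fintype n] [DecidableEq n] {A : Matrix n n ℂ}
    (hA : A.PosSemidef) : 0 ≤ A.trace.re := by
  rw [Matrix.trace, Complex.re_sum]
  exact Finset.sum_nonneg fun i _ => (Complex.le_def.mp (psd_diag_nonneg hA i)).1

-- Frobenius norm squared as entries
lemma frob_eq {n : Type*} [Fintype n] [DecidableEq n] (X : Matrix n n ℂ) :
    (Xᴴ * X).trace.re = ∑ p : n × n, ‖X p.1 p.2‖ ^ 2 := by
  rw [Matrix.trace, Complex.re_sum, Fintype.sum_prod_type_right]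
  congr 1; ext j
  rw [Matrix.diag]
  simp only [Matrix.mul_apply, Matrix.conjTranspose_apply, Complex.re_sum]
  congr 1; ext i
  rw [Complex.sq_norm, Complex.normSq_apply]
  simp [Complex.mul_re]

-- Frobenius Cauchy-Schwarz
lemma frob_cs {n : Type*} [Fintype n] [DecidableEq n] (X Y : Matrix n n ℂ) :
    (Xᴴ * Y).trace.re ≤ Real.sqrt ((Xᴴ * X).trace.re) * Real.sqrt ((Yᴴ * Y).trace.re) := by
  have h1 : (Xᴴ * Y).trace.re = ∑ p : n × n, (starRingEnd ℂ (X p.1 p.2) * Y p.1 p.2).re := by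
    rw [Matrix.trace, Complex.re_sum, Fintype.sum_prod_type_right]
    congr 1; ext j
    rw [Matrix.diag]
    simp only [Matrix.mul_apply, Matrix.conjTranspose_apply, Complex.re_sum, RingHom.coe_coe,
      starRingEnd_apply]
  rw [h1, frob_eq, frob_eq]
  calc ∑ p : n × n, (starRingEnd ℂ (X p.1 p.2) * Y p.1 p.2).re
      ≤ ∑ p : n × n, ‖X p.1 p.2‖ * ‖Y p.1 p.2‖ := by
        apply Finset.sum_le_sum
        intro p _
        calc (starRingEnd ℂ (X p.1 p.2) * Y p.1 p.2).re
            ≤ ‖starRingEnd ℂ (X p.1 p.2) * Y p.1 p.2‖ := Complex.re_le_norm _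
          _ = ‖X p.1 p.2‖ * ‖Y p.1 p.2‖ := by
              rw [norm_mul, Complex.norm_conj]
    _ ≤ _ := Real.sum_mul_le_sqrt_mul_sqrt _ _ _


lemma traceNorm_mul_le {n : Type*} [Fintype n] [DecidableEq n] (G H : Matrix n n ℂ) :
    traceNorm (G * H) ≤
      Real.sqrt ((Gᴴ * G).trace.re) * Real.sqrt ((Hᴴ * H).trace.re) := by
  classical
  set M := G * H with hM
  set hB := Matrix.posSemidef_conjTranspose_mul_self M with hBdef
  set S := hB.sqrt with hSdef
  have hS : S.PosSemidef := hB.posSemidef_sqrt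
  have hSsq : S * S = Mᴴ * M := hB.sqrt_mul_self
  set hH : S.IsHermitian := hS.1 with hHdef
  set W : Matrix n n ℂ := (hH.eigenvectorUnitary : Matrix n n ℂ) with hWdef
  set μ : n → ℝ := hH.eigenvalues with hμdef
  have hμ0 : ∀ i, 0 ≤ μ i := hS.eigenvalues_nonneg
  have hW1 : Wᴴ * W = 1 := by
    rw [← Matrix.star_eq_conjTranspose]
    exact Matrix.mem_unitaryGroup_iff'.mp hH.eigenvectorUnitary.2
  have hW2 : W * Wᴴ = 1 := by
    rw [← Matrix.star_eq_conjTranspose]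
    exact Matrix.mem_unitaryGroup_iff.mp hH.eigenvectorUnitary.2
  have hspec : S = W * Matrix.diagonal (Complex.ofReal ∘ μ) * Wᴴ := by
    rw [← Matrix.star_eq_conjTranspose]; have := hH.spectral_theorem
    rw [Unitary.conjStarAlgAut_apply] at this; exact this
  -- trace of S
  have htrS : S.trace.re = ∑ i, μ i := by
    rw [hspec, Matrix.trace_mul_cycle, hW1, Matrix.one_mul,
      Matrix.trace_diagonal, Complex.re_sum]
    simp
  -- the matrix K = Wᴴ (MᴴM) W is diagonal with entries μᵢ²
  have cancel : ∀ X : Matrix n n ℂ, X * Wᴴ * W = X := fun X => by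
    rw [Matrix.mul_assoc, hW1, Matrix.mul_one]
  have hK : Wᴴ * (Mᴴ * M) * W = Matrix.diagonal (fun i => (μ i : ℂ) * μ i) := by
    rw [← hSsq, hspec]
    simp only [← Matrix.mul_assoc]
    rw [hW1, Matrix.one_mul, cancel, cancel, Matrix.diagonal_mul_diagonal]
    rfl
  -- partial isometry U
  set d' : n → ℂ := fun i => if μ i = 0 then 0 else ((μ i : ℂ))⁻¹ with hd'def
  have hd'star : ∀ i, star (d' i) = d' i := by
    intro i
    simp only [hd'def]
    split
    · simp
    · rw [star_inv₀]
      simp [Complex.conj_ofReal]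
  set D' : Matrix n n ℂ := Matrix.diagonal d' with hD'def
  have hD'H : D'ᴴ = D' := by
    rw [hD'def, Matrix.diagonal_conjTranspose]
    exact congrArg Matrix.diagonal (funext fun i => hd'star i)
  set U : Matrix n n ℂ := M * W * D' with hUdef
  set q : n → ℂ := fun i => if μ i = 0 then 0 else 1 with hqdef
  have hUHU : Uᴴ * U = Matrix.diagonal q := by
    rw [hUdef, Matrix.conjTranspose_mul, Matrix.conjTranspose_mul, hD'H]
    have : D' * (Wᴴ * Mᴴ) * (M * W * D') = D' * (Wᴴ * (Mᴴ * M) * W) * D' := by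
      simp only [Matrix.mul_assoc]
    rw [this, hK, hD'def, Matrix.diagonal_mul_diagonal, Matrix.diagonal_mul_diagonal]
    refine congrArg Matrix.diagonal (funext fun i => ?_)
    simp only [hd'def, hqdef]
    by_cases h : μ i = 0
    · simp [h]
    · have hne : (μ i : ℂ) ≠ 0 := Complex.ofReal_ne_zero.mpr h
      simp only [if_neg h]
      field_simp
  have hUMW : Uᴴ * (M * W) = Matrix.diagonal (fun i => (μ i : ℂ)) := by
    rw [hUdef, Matrix.conjTranspose_mul, Matrix.conjTranspose_mul, hD'H]
    have : D' * (Wᴴ * Mᴴ) * (M * W) = D' * (Wᴴ * (Mᴴ * M) * W) := by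
      simp only [Matrix.mul_assoc]
    rw [this, hK, hD'def, Matrix.diagonal_mul_diagonal]
    refine congrArg Matrix.diagonal (funext fun i => ?_)
    simp only [hd'def]
    by_cases h : μ i = 0
    · simp [h]
    · have hne : (μ i : ℂ) ≠ 0 := Complex.ofReal_ne_zero.mpr h
      simp only [if_neg h]
      field_simp
  -- 1 - U Uᴴ is PSD
  set P : Matrix n n ℂ := U * Uᴴ with hPdef
  have hPH : Pᴴ = P := by rw [hPdef, Matrix.conjTranspose_mul, Matrix.conjTranspose_conjTranspose]
  have hUQ : U * Matrix.diagonal q = U := by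
    rw [hUdef, Matrix.mul_assoc, hD'def, Matrix.diagonal_mul_diagonal]
    have : (fun i => d' i * q i) = d' := by
      funext i
      simp only [hd'def, hqdef]
      by_cases h : μ i = 0 <;> simp [h]
    rw [this]
  have hPP : P * P = P := by
    rw [hPdef]
    calc U * Uᴴ * (U * Uᴴ) = U * (Uᴴ * U) * Uᴴ := by simp only [Matrix.mul_assoc]
      _ = U * Uᴴ := by rw [hUHU, hUQ]
  have h1P : (1 - P)ᴴ * (1 - P) = 1 - P := by
    rw [Matrix.conjTranspose_sub, Matrix.conjTranspose_one, hPH]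
    rw [Matrix.sub_mul, Matrix.mul_sub, Matrix.mul_sub, hPP]
    simp only [Matrix.one_mul, Matrix.mul_one]
    abel
  have hPSD1P : (1 - P).PosSemidef := by
    have := Matrix.posSemidef_conjTranspose_mul_self (1 - P)
    rwa [h1P] at this
  -- main chain
  have key : S.trace.re = (((Gᴴ * U)ᴴ) * (H * W)).trace.re := by
    have e1 : (Gᴴ * U)ᴴ * (H * W) = Uᴴ * (M * W) := by
      rw [Matrix.conjTranspose_mul, Matrix.conjTranspose_conjTranspose, hM]
      simp only [Matrix.mul_assoc]
    rw [e1, hUMW, htrS, Matrix.trace_diagonal, Complex.re_sum]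
    simp
  have hXa : (Gᴴ * U)ᴴ * (Gᴴ * U) = Uᴴ * (G * Gᴴ) * U := by
    rw [Matrix.conjTranspose_mul, Matrix.conjTranspose_conjTranspose]
    simp only [Matrix.mul_assoc]
  have hYa : (H * W)ᴴ * (H * W) = Wᴴ * (Hᴴ * H) * W := by
    rw [Matrix.conjTranspose_mul]
    simp only [Matrix.mul_assoc]
  have hY : ((H * W)ᴴ * (H * W)).trace = (Hᴴ * H).trace := by
    rw [hYa, Matrix.trace_mul_cycle, ← Matrix.mul_assoc, hW2, Matrix.one_mul]
  have hX : ((Gᴴ * U)ᴴ * (Gᴴ * U)).trace.re ≤ (Gᴴ * G).trace.re := by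
    rw [hXa]
    have e2 : (Gᴴ * G).trace = (G * Gᴴ).trace := Matrix.trace_mul_comm _ _
    have e3 : (Uᴴ * (G * Gᴴ) * U).trace = (G * Gᴴ * P).trace := by
      rw [Matrix.trace_mul_comm, ← Matrix.mul_assoc, ← hPdef, Matrix.trace_mul_comm]
    have e4 : (G * Gᴴ).trace - (G * Gᴴ * P).trace = (Gᴴ * (1 - P) * G).trace := by
      rw [Matrix.mul_sub, Matrix.mul_one, Matrix.sub_mul, Matrix.trace_sub]
      congr 1
      · exact Matrix.trace_mul_comm G Gᴴ
      · exact (Matrix.trace_mul_cycle Gᴴ P G).symm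
    have e5 : 0 ≤ (Gᴴ * (1 - P) * G).trace.re :=
      psd_trace_re_nonneg (hPSD1P.conjTranspose_mul_mul_same G)
    have := e4
    rw [e2, e3]
    have : ((G * Gᴴ).trace - (G * Gᴴ * P).trace).re = (Gᴴ * (1 - P) * G).trace.re := by
      rw [e4]
    rw [Complex.sub_re] at this
    linarith
  calc traceNorm M = S.trace.re := rfl
    _ = (((Gᴴ * U)ᴴ) * (H * W)).trace.re := key
    _ ≤ Real.sqrt (((Gᴴ * U)ᴴ * (Gᴴ * U)).trace.re) *
        Real.sqrt (((H * W)ᴴ * (H * W)).trace.re) := frob_cs _ _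
    _ ≤ Real.sqrt ((Gᴴ * G).trace.re) * Real.sqrt ((Hᴴ * H).trace.re) := by
        apply mul_le_mul
        · exact Real.sqrt_le_sqrt hX
        · rw [hY]
        · exact Real.sqrt_nonneg _
        · exact Real.sqrt_nonneg _


lemma kron_conjTranspose {n m : Type*} [Fintype n] [Fintype m] (A : Matrix n n ℂ)
    (B : Matrix m m ℂ) : (A ⊗ₖ B)ᴴ = Aᴴ ⊗ₖ Bᴴ := by
  ext ⟨i, j⟩ ⟨k, l⟩
  simp [Matrix.conjTranspose_apply, Matrix.kroneckerMap_apply, star_mul']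

lemma maxClassCorr_diag (d : ℕ) :
    maxClassCorr d =
      Matrix.diagonal (fun p : Fin d × Fin d => if p.1 = p.2 then ((d:ℂ))⁻¹ else 0) := by
  rw [maxClassCorr]
  ext ⟨i, j⟩ ⟨k, l⟩
  simp only [Matrix.smul_apply, Matrix.sum_apply, Matrix.kroneckerMap_apply,
    Matrix.single, Matrix.of_apply, Matrix.diagonal, smul_eq_mul, ite_mul, one_mul,
    zero_mul, mul_ite, mul_one, mul_zero]
  have : ∀ x : Fin d, ((if x = j ∧ x = l then if x = i ∧ x = k then (1:ℂ) else 0 else 0))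
      = if x = i then (if i = j ∧ i = k ∧ i = l then (1:ℂ) else 0) else 0 := by
    intro x
    by_cases h1 : x = j <;> by_cases h2 : x = l <;> by_cases h3 : x = i <;> by_cases h4 : x = k <;>
      subst_eqs <;> simp_all
  rw [Finset.sum_congr rfl (fun x _ => this x),
    Finset.sum_ite_eq' Finset.univ i (fun _ => if i = j ∧ i = k ∧ i = l then (1:ℂ) else 0)]
  simp only [Finset.mem_univ, if_true, Prod.mk.injEq, Prod.ext_iff]
  by_cases h1 : i = j <;> by_cases h2 : i = k <;> by_cases h3 : j = l <;>
    subst_eqs <;> simp_all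

theorem stmt18 (d : ℕ) (hd : 1 ≤ d)
    (σA σB : Matrix (Fin d) (Fin d) ℂ)
    (hA : σA.PosSemidef) (hB : σB.PosSemidef)
    (hAtr : σA.trace.re ≤ 1) (hBtr : σB.trace.re ≤ 1) :
    fid (maxClassCorr d) (σA ⊗ₖ σB) ≤ 1 / d := by
  classical
  have hd0 : (0:ℝ) < d := by exact_mod_cast hd
  -- diagonal entries
  set a : Fin d → ℝ := fun i => (σA i i).re with hadef
  set b : Fin d → ℝ := fun i => (σB i i).re with hbdef
  have ha0 : ∀ i, 0 ≤ a i := fun i => (Complex.le_def.mp (psd_diag_nonneg hA i)).1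
  have hb0 : ∀ i, 0 ≤ b i := fun i => (Complex.le_def.mp (psd_diag_nonneg hB i)).1
  have haC : ∀ i, σA i i = (a i : ℂ) := by
    intro i
    have him := (Complex.le_def.mp (psd_diag_nonneg hA i)).2
    apply Complex.ext <;> simp [hadef, ← him]
  have hbC : ∀ i, σB i i = (b i : ℂ) := by
    intro i
    have him := (Complex.le_def.mp (psd_diag_nonneg hB i)).2
    apply Complex.ext <;> simp [hbdef, ← him]
  have hasum : ∑ i, a i ≤ 1 := by
    rw [hadef]
    calc ∑ i, (σA i i).re = σA.trace.re := by rw [Matrix.trace, Complex.re_sum]; rfl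
      _ ≤ 1 := hAtr
  have hbsum : ∑ i, b i ≤ 1 := by
    rw [hbdef]
    calc ∑ i, (σB i i).re = σB.trace.re := by rw [Matrix.trace, Complex.re_sum]; rfl
      _ ≤ 1 := hBtr
  -- PSD of Φ and σA ⊗ σB
  set Φ : Matrix (Fin d × Fin d) (Fin d × Fin d) ℂ := maxClassCorr d with hΦdef
  have hΦdiag : Φ = Matrix.diagonal
      (fun p : Fin d × Fin d => if p.1 = p.2 then ((d:ℂ))⁻¹ else 0) := maxClassCorr_diag d
  have hΦ : Φ.PosSemidef := by
    rw [hΦdiag]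
    apply Matrix.PosSemidef.diagonal
    intro p
    dsimp only
    split
    · rw [Complex.le_def]
      constructor
      · simp only [Complex.zero_re, ← Complex.ofReal_natCast, ← Complex.ofReal_inv,
          Complex.ofReal_re]
        positivity
      · simp [← Complex.ofReal_natCast, ← Complex.ofReal_inv]
    · exact le_refl 0
  have hσ : (σA ⊗ₖ σB).PosSemidef := by
    have h1 : (hA.sqrt ⊗ₖ hB.sqrt)ᴴ * (hA.sqrt ⊗ₖ hB.sqrt) = σA ⊗ₖ σB := by
      rw [kron_conjTranspose, hA.posSemidef_sqrt.1, hB.posSemidef_sqrt.1,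
        ← Matrix.mul_kronecker_mul, hA.sqrt_mul_self, hB.sqrt_mul_self]
    exact h1 ▸ Matrix.posSemidef_conjTranspose_mul_self _
  -- square roots
  set m1 : Matrix (Fin d × Fin d) (Fin d × Fin d) ℂ := msqrt Φ with hm1def
  set m2 : Matrix (Fin d × Fin d) (Fin d × Fin d) ℂ := msqrt (σA ⊗ₖ σB) with hm2def
  have hm1 : m1 = hΦ.sqrt := by rw [hm1def, msqrt, dif_pos hΦ]
  have hm2 : m2 = hσ.sqrt := by rw [hm2def, msqrt, dif_pos hσ]
  have hm1H : m1ᴴ = m1 := by rw [hm1]; exact hΦ.posSemidef_sqrt.1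
  have hm2H : m2ᴴ = m2 := by rw [hm2]; exact hσ.posSemidef_sqrt.1
  have hm1sq : m1 * m1 = Φ := by rw [hm1]; exact hΦ.sqrt_mul_self
  have hm2sq : m2 * m2 = σA ⊗ₖ σB := by rw [hm2]; exact hσ.sqrt_mul_self
  -- the epsilon bound
  have main : ∀ ε : ℝ, 0 < ε →
      fid Φ (σA ⊗ₖ σB) ≤ (1 + (d:ℝ)*ε)/(d:ℝ) * ((1 + (d:ℝ)*ε) + ε^2) := by
    intro ε hε
    set g : Fin d × Fin d → ℝ := fun p =>
      if p.1 = p.2 then Real.sqrt (Real.sqrt ((a p.1 + ε) * (b p.2 + ε))) else ε⁻¹ with hgdef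
    have hgpos : ∀ p, 0 < g p := by
      intro p
      rw [hgdef]
      dsimp only
      split
      · apply Real.sqrt_pos.mpr
        apply Real.sqrt_pos.mpr
        have := ha0 p.1; have := hb0 p.2
        positivity
      · positivity
    set G : Matrix (Fin d × Fin d) (Fin d × Fin d) ℂ :=
      Matrix.diagonal (fun p => (g p : ℂ)) with hGdef
    set G' : Matrix (Fin d × Fin d) (Fin d × Fin d) ℂ :=
      Matrix.diagonal (fun p => (((g p)⁻¹ : ℝ) : ℂ)) with hG'def
    have hGG' : G * G' = 1 := by
      rw [hGdef, hG'def, Matrix.diagonal_mul_diagonal]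
      rw [show (1 : Matrix (Fin d × Fin d) (Fin d × Fin d) ℂ) = Matrix.diagonal (fun _ => 1) from
        (Matrix.diagonal_one).symm]
      refine congrArg Matrix.diagonal (funext fun p => ?_)
      rw [← Complex.ofReal_mul, mul_inv_cancel₀ (ne_of_gt (hgpos p)), Complex.ofReal_one]
    have hsplit : m1 * m2 = (m1 * G) * (G' * m2) := by
      calc m1 * m2 = m1 * (G * G') * m2 := by rw [hGG', Matrix.mul_one]
        _ = (m1 * G) * (G' * m2) := by simp only [Matrix.mul_assoc]
    have hGH : (Gᴴ : Matrix _ _ ℂ) = G := by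
      rw [hGdef, Matrix.diagonal_conjTranspose]
      refine congrArg Matrix.diagonal (funext fun p => ?_)
      simp [Complex.conj_ofReal]
    have hG'H : (G'ᴴ : Matrix _ _ ℂ) = G' := by
      rw [hG'def, Matrix.diagonal_conjTranspose]
      refine congrArg Matrix.diagonal (funext fun p => ?_)
      simp [Complex.conj_ofReal]
    set Sε : ℝ := ∑ m : Fin d, Real.sqrt ((a m + ε) * (b m + ε)) with hSdef
    have hSnn : 0 ≤ Sε := Finset.sum_nonneg fun m _ => Real.sqrt_nonneg _
    have hgdiagsq : ∀ m : Fin d, g (m, m) * g (m, m) = Real.sqrt ((a m + ε) * (b m + ε)) := by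
      intro m
      rw [hgdef]
      dsimp only
      rw [if_pos rfl]
      exact Real.mul_self_sqrt (Real.sqrt_nonneg _)
    -- T1
    have hT1 : ((m1 * G)ᴴ * (m1 * G)).trace.re = Sε * (d:ℝ)⁻¹ := by
      have e1 : (m1 * G)ᴴ * (m1 * G) = Gᴴ * (m1ᴴ * m1) * G := by
        rw [Matrix.conjTranspose_mul]
        simp only [Matrix.mul_assoc]
      rw [e1, hm1H, hm1sq, hGH, hΦdiag, hGdef, Matrix.diagonal_mul_diagonal,
        Matrix.diagonal_mul_diagonal, Matrix.trace_diagonal, Complex.re_sum,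
        Fintype.sum_prod_type]
      have : ∀ i j : Fin d, (((g (i,j) : ℂ)) * (if i = j then ((d:ℂ))⁻¹ else 0) * (g (i,j))).re
          = if i = j then Real.sqrt ((a i + ε) * (b i + ε)) * (d:ℝ)⁻¹ else 0 := by
        intro i j
        by_cases h : i = j
        · subst h
          rw [if_pos rfl, if_pos rfl, ← hgdiagsq i]
          have : ((g (i,i) : ℂ) * ((d:ℕ):ℂ)⁻¹ * (g (i,i) : ℂ))
              = (((g (i,i) * g (i,i) * ((d:ℝ))⁻¹ : ℝ)) : ℂ) := by
            push_cast
            ring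
          rw [this, Complex.ofReal_re]
        · rw [if_neg h, if_neg h]
          simp
      rw [Finset.sum_congr rfl (fun i _ => Finset.sum_congr rfl (fun j _ => this i j))]
      rw [hSdef, Finset.sum_mul]
      refine Finset.sum_congr rfl (fun i _ => ?_)
      rw [Finset.sum_ite_eq Finset.univ i
        (fun _ => Real.sqrt ((a i + ε) * (b i + ε)) * (d:ℝ)⁻¹)]
      simp
    -- T2
    have hT2 : ((G' * m2)ᴴ * (G' * m2)).trace.re ≤ Sε + ε^2 := by
      have e1 : (G' * m2)ᴴ * (G' * m2) = m2ᴴ * (G'ᴴ * G') * m2 := by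
        rw [Matrix.conjTranspose_mul]
        simp only [Matrix.mul_assoc]
      have e2 : (m2ᴴ * (G'ᴴ * G') * m2).trace = ((σA ⊗ₖ σB) * (G'ᴴ * G')).trace := by
        rw [Matrix.trace_mul_cycle, hm2H, hm2sq]
      have e3 : (G'ᴴ * G') = Matrix.diagonal (fun p => (((g p)⁻¹ * (g p)⁻¹ : ℝ) : ℂ)) := by
        rw [hG'H, hG'def, Matrix.diagonal_mul_diagonal]
        refine congrArg Matrix.diagonal (funext fun p => ?_)
        push_cast
        ring
      rw [e1, e2, e3]
      have e4 : ((σA ⊗ₖ σB) * Matrix.diagonal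
          (fun p => (((g p)⁻¹ * (g p)⁻¹ : ℝ) : ℂ))).trace.re
          = ∑ i : Fin d, ∑ j : Fin d, (a i * b j) * ((g (i,j))⁻¹ * (g (i,j))⁻¹) := by
        rw [Matrix.trace, Complex.re_sum, Fintype.sum_prod_type]
        refine Finset.sum_congr rfl (fun i _ => Finset.sum_congr rfl (fun j _ => ?_))
        rw [Matrix.diag_apply, Matrix.mul_diagonal, Matrix.kroneckerMap_apply, haC, hbC]
        rw [← Complex.ofReal_mul, ← Complex.ofReal_mul, Complex.ofReal_re]
      rw [e4]
      have hbound : ∀ i j : Fin d, (a i * b j) * ((g (i,j))⁻¹ * (g (i,j))⁻¹)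
          ≤ (if i = j then Real.sqrt ((a i + ε) * (b i + ε)) else 0) + ε^2 * (a i * b j) := by
        intro i j
        by_cases h : i = j
        · subst h
          rw [if_pos rfl]
          have hx : (0:ℝ) < Real.sqrt ((a i + ε) * (b i + ε)) := by
            apply Real.sqrt_pos.mpr
            have := ha0 i; have := hb0 i
            positivity
          have hginv : (g (i,i))⁻¹ * (g (i,i))⁻¹ = (Real.sqrt ((a i + ε) * (b i + ε)))⁻¹ := by
            rw [← mul_inv, hgdiagsq i]
          rw [hginv]
          have h1 : a i * b i ≤ (a i + ε) * (b i + ε) := by nlinarith [ha0 i, hb0 i]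
          have hxx : (0:ℝ) < (a i + ε) * (b i + ε) := by
            have := ha0 i; have := hb0 i
            positivity
          have h2 : a i * b i * (Real.sqrt ((a i + ε) * (b i + ε)))⁻¹
              ≤ Real.sqrt ((a i + ε) * (b i + ε)) := by
            rw [mul_inv_le_iff₀ hx]
            calc a i * b i ≤ (a i + ε) * (b i + ε) := h1
              _ = Real.sqrt ((a i + ε) * (b i + ε)) * Real.sqrt ((a i + ε) * (b i + ε)) :=
                (Real.mul_self_sqrt hxx.le).symm
          have h3 : 0 ≤ ε^2 * (a i * b i) := by
            have := ha0 i; have := hb0 i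
            positivity
          linarith
        · rw [if_neg h]
          have : g (i, j) = ε⁻¹ := by rw [hgdef]; exact if_neg h
          rw [this]
          rw [inv_inv]
          nlinarith [ha0 i, hb0 j, hε]
      calc ∑ i : Fin d, ∑ j : Fin d, (a i * b j) * ((g (i,j))⁻¹ * (g (i,j))⁻¹)
          ≤ ∑ i : Fin d, ∑ j : Fin d,
            ((if i = j then Real.sqrt ((a i + ε) * (b i + ε)) else 0) + ε^2 * (a i * b j)) :=
            Finset.sum_le_sum fun i _ => Finset.sum_le_sum fun j _ => hbound i j
        _ = Sε + ε^2 * ((∑ i, a i) * (∑ j, b j)) := by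
            rw [Finset.sum_congr rfl (fun i (_ : i ∈ Finset.univ) => Finset.sum_add_distrib)]
            rw [Finset.sum_add_distrib, hSdef]
            congr 1
            · refine Finset.sum_congr rfl (fun i _ => ?_)
              rw [Finset.sum_ite_eq Finset.univ i
                (fun _ => Real.sqrt ((a i + ε) * (b i + ε)))]
              simp
            · rw [Finset.sum_mul_sum, Finset.mul_sum]
              simp only [Finset.mul_sum]
        _ ≤ Sε + ε^2 := by
            have h1 : (∑ i, a i) * (∑ j, b j) ≤ 1 :=
              mul_le_one₀ hasum (Finset.sum_nonneg fun j _ => hb0 j) hbsum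
            nlinarith [sq_nonneg ε]
    -- assemble
    have htn := traceNorm_mul_le (m1 * G) (G' * m2)
    rw [← hsplit] at htn
    have hT1nn : 0 ≤ ((m1 * G)ᴴ * (m1 * G)).trace.re :=
      psd_trace_re_nonneg (Matrix.posSemidef_conjTranspose_mul_self _)
    have hT2nn : 0 ≤ ((G' * m2)ᴴ * (G' * m2)).trace.re :=
      psd_trace_re_nonneg (Matrix.posSemidef_conjTranspose_mul_self _)
    have htnn : 0 ≤ traceNorm (m1 * m2) :=
      psd_trace_re_nonneg (Matrix.posSemidef_conjTranspose_mul_self _).posSemidef_sqrt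
    have hfid : fid Φ (σA ⊗ₖ σB) ≤
        ((m1 * G)ᴴ * (m1 * G)).trace.re * ((G' * m2)ᴴ * (G' * m2)).trace.re := by
      rw [fid, ← hm1def, ← hm2def]
      calc (traceNorm (m1 * m2))^2
          ≤ (Real.sqrt (((m1 * G)ᴴ * (m1 * G)).trace.re) *
             Real.sqrt (((G' * m2)ᴴ * (G' * m2)).trace.re))^2 := by
            apply pow_le_pow_left₀ htnn htn
        _ = _ := by
            rw [mul_pow, Real.sq_sqrt hT1nn, Real.sq_sqrt hT2nn]
    -- Sε bound
    have hSle : Sε ≤ 1 + d * ε := by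
      have e : ∀ m : Fin d, Real.sqrt ((a m + ε) * (b m + ε))
          = Real.sqrt (a m + ε) * Real.sqrt (b m + ε) := by
        intro m
        rw [Real.sqrt_mul (by linarith [ha0 m])]
      rw [hSdef, Finset.sum_congr rfl (fun m _ => e m)]
      calc ∑ m : Fin d, Real.sqrt (a m + ε) * Real.sqrt (b m + ε)
          ≤ Real.sqrt (∑ m, (a m + ε)) * Real.sqrt (∑ m, (b m + ε)) :=
            Real.sum_sqrt_mul_sqrt_le _ (fun m => by linarith [ha0 m])
              (fun m => by linarith [hb0 m])
        _ ≤ Real.sqrt (1 + d * ε) * Real.sqrt (1 + d * ε) := by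
            apply mul_le_mul
            · apply Real.sqrt_le_sqrt
              rw [Finset.sum_add_distrib]
              simp only [Finset.sum_const, Finset.card_univ, Fintype.card_fin, nsmul_eq_mul]
              linarith
            · apply Real.sqrt_le_sqrt
              rw [Finset.sum_add_distrib]
              simp only [Finset.sum_const, Finset.card_univ, Fintype.card_fin, nsmul_eq_mul]
              linarith
            · exact Real.sqrt_nonneg _
            · exact Real.sqrt_nonneg _
        _ = 1 + d * ε := Real.mul_self_sqrt (by positivity)
    calc fid Φ (σA ⊗ₖ σB)
        ≤ ((m1 * G)ᴴ * (m1 * G)).trace.re * ((G' * m2)ᴴ * (G' * m2)).trace.re := hfid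
      _ ≤ (Sε * (d:ℝ)⁻¹) * (Sε + ε^2) := by
          rw [hT1]
          apply mul_le_mul_of_nonneg_left hT2
          positivity
      _ ≤ (1 + (d:ℝ)*ε)/(d:ℝ) * ((1 + (d:ℝ)*ε) + ε^2) := by
          apply mul_le_mul
          · rw [div_eq_mul_inv]
            apply mul_le_mul_of_nonneg_right hSle
            positivity
          · linarith
          · positivity
          · positivity
  -- take the limit ε → 0⁺
  have hlim : Filter.Tendsto (fun ε : ℝ => (1 + (d:ℝ)*ε)/(d:ℝ) * ((1 + (d:ℝ)*ε) + ε^2))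
      (nhdsWithin (0:ℝ) (Set.Ioi 0)) (nhds (1 / (d:ℝ))) := by
    have hc : Filter.Tendsto (fun ε : ℝ => (1 + (d:ℝ)*ε)/(d:ℝ) * ((1 + (d:ℝ)*ε) + ε^2))
        (nhds 0) (nhds ((1 + (d:ℝ)*0)/(d:ℝ) * ((1 + (d:ℝ)*0) + 0^2))) := by
      apply Filter.Tendsto.mul
      · apply Filter.Tendsto.div_const
        apply Filter.Tendsto.const_add
        exact (continuous_const.mul continuous_id).tendsto 0
      · apply Filter.Tendsto.add
        · apply Filter.Tendsto.const_add
          exact (continuous_const.mul continuous_id).tendsto 0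
        · exact (continuous_pow 2).tendsto 0
    have : ((1 + (d:ℝ)*0)/(d:ℝ) * ((1 + (d:ℝ)*0) + 0^2)) = 1/(d:ℝ) := by norm_num
    rw [this] at hc
    exact hc.mono_left nhdsWithin_le_nhds
  exact ge_of_tendsto hlim (eventually_nhdsWithin_of_forall (fun ε hε => main ε hε))
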